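/- Any lattice point of a fine Minkowski cell ∏_T = y_1Δ_{T_1}+⋯+y_mΔ_{T_m}, where T is a spanning tree of G ⊆ K_{m,n} with ∑_i(|T_i|−1)=n−1 and the y_i are nonnegative integers, is uniquely expressed as p_1+⋯+p_m where each p_i is a lattice point of y_iΔ_{T_i}. -/

import Mathlib

open SimpleGraph Sum Finset

lemma tree_flow_zero {m n : ℕ} (T : SimpleGraph (Fin m ⊕ Fin n))
    (hT : T.IsAcyclic) (d : Fin m → Fin n → ℤ)
    (hsupp : ∀ i j, ¬ T.Adj (inl i) (inr j) → d i j = 0)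
    (hrow : ∀ i, ∑ j, d i j = 0)
    (hcol : ∀ j, ∑ i, d i j = 0) :
    ∀ i j, d i j = 0 := by
  classical
  intro i0 j0
  by_cases hadj : T.Adj (inl i0) (inr j0)
  · -- the edge is a bridge
    have hbridge : T.IsBridge s(inl i0, inr j0) :=
      (isAcyclic_iff_forall_adj_isBridge.mp hT) hadj
    rw [isBridge_iff] at hbridge
    set T' : SimpleGraph (Fin m ⊕ Fin n) := T \ fromEdgeSet {s(inl i0, inr j0)} with hT'
    have hnr : ¬ T'.Reachable (inl i0) (inr j0) := hbridge
    set C : Set (Fin m ⊕ Fin n) := {v | T'.Reachable (inl i0) v} with hC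
    have hCi0 : inl i0 ∈ C := Reachable.refl _
    have hCj0 : inr j0 ∉ C := hnr
    -- edges other than (i0,j0) don't cross C
    have hcross : ∀ i j, T.Adj (inl i) (inr j) → ¬(i = i0 ∧ j = j0) →
        (inl i ∈ C ↔ inr j ∈ C) := by
      intro i j hij hne
      have hne' : s(inl (α := Fin m) i, inr (β := Fin n) j) ≠ s(inl i0, inr j0) := by
        intro h
        rw [Sym2.eq_iff] at h
        rcases h with ⟨h1, h2⟩ | ⟨h1, h2⟩
        · exact hne ⟨inl.inj h1, inr.inj h2⟩
        · exact inl_ne_inr h1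
      have hadj' : T'.Adj (inl i) (inr j) := by
        rw [hT', sdiff_adj, fromEdgeSet_adj]
        exact ⟨hij, by simp [hne']⟩
      constructor
      · intro h; exact h.trans hadj'.reachable
      · intro h; exact h.trans hadj'.symm.reachable
    -- the signed sum
    have key : ∑ i : Fin m, ∑ j : Fin n,
        ((if inl i ∈ C then d i j else 0) - (if inr j ∈ C then d i j else 0)) = d i0 j0 := by
      have hterm : ∀ i j,
          ((if inl i ∈ C then d i j else 0) - (if inr j ∈ C then d i j else 0))
            = if i = i0 ∧ j = j0 then d i0 j0 else 0 := by
        intro i j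
        by_cases hij : i = i0 ∧ j = j0
        · obtain ⟨rfl, rfl⟩ := hij
          simp [hCi0, hCj0]
        · by_cases ha : T.Adj (inl i) (inr j)
          · have := hcross i j ha hij
            by_cases h1 : inl i ∈ C
            · simp [h1, this.mp h1, hij]
            · have h2 : inr j ∉ C := fun h => h1 (this.mpr h)
              simp [h1, h2, hij]
          · simp [hsupp i j ha, hij]
      simp only [hterm]
      have hin : ∀ i : Fin m, ∑ j : Fin n, (if i = i0 ∧ j = j0 then d i0 j0 else 0)
          = if i = i0 then d i0 j0 else 0 := by
        intro i
        by_cases h : i = i0 <;> simp [h]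
      simp [hin]
    have hzero : ∑ i : Fin m, ∑ j : Fin n,
        ((if inl i ∈ C then d i j else 0) - (if inr j ∈ C then d i j else 0)) = 0 := by
      have h1 : ∑ i : Fin m, ∑ j : Fin n, (if inl i ∈ C then d i j else 0) = 0 := by
        have : ∀ i : Fin m, ∑ j : Fin n, (if inl i ∈ C then d i j else 0)
            = if inl i ∈ C then (0 : ℤ) else 0 := by
          intro i
          by_cases h : inl i ∈ C <;> simp [h, hrow i]
        simp [this]
      have h2 : ∑ i : Fin m, ∑ j : Fin n, (if inr j ∈ C then d i j else 0) = 0 := by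
        rw [Finset.sum_comm]
        have : ∀ j : Fin n, ∑ i : Fin m, (if inr j ∈ C then d i j else 0)
            = if inr j ∈ C then (0 : ℤ) else 0 := by
          intro j
          by_cases h : inr j ∈ C <;> simp [h, hcol j]
        simp [this]
      simp only [Finset.sum_sub_distrib, h1, h2, sub_zero]
    rw [hzero] at key
    exact key.symm
  · exact hsupp i0 j0 hadj

/-- Any lattice point of a fine Minkowski cell
`∏_T = y_1Δ_{T_1} + ⋯ + y_mΔ_{T_m}`, where `T` is a spanning tree of bipartite
`G ⊆ K_{m,n}` with `∑ (|T_i|−1) = n−1` and the `y_i` are nonnegative integers,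
is uniquely expressed as `p_1 + ⋯ + p_m` with `p_i` a lattice point of
`y_iΔ_{T_i}` (a nonnegative integer vector supported on `T_i` summing to `y_i`). -/
theorem cell_lattice_point_unique_sum (m n : ℕ) [NeZero n]
    (G T : SimpleGraph (Fin m ⊕ Fin n))
    (hGbip : (∀ i j : Fin m, ¬ G.Adj (inl i) (inl j)) ∧
             (∀ i j : Fin n, ¬ G.Adj (inr i) (inr j)))
    (hsub : T ≤ G) (htree : T.IsTree)
    (hfine : ∑ i : Fin m, (({j : Fin n | T.Adj (inl i) (inr j)}.ncard : ℤ) - 1)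
      = (n : ℤ) - 1)
    (y : Fin m → ℕ) :
    ∀ x : Fin n → ℕ,
      (∃ p : Fin m → Fin n → ℕ,
        (∀ i, (∀ k, ¬ T.Adj (inl i) (inr k) → p i k = 0) ∧ ∑ k, p i k = y i) ∧
        x = ∑ i, p i) →
      ∃! p : Fin m → Fin n → ℕ,
        (∀ i, (∀ k, ¬ T.Adj (inl i) (inr k) → p i k = 0) ∧ ∑ k, p i k = y i) ∧
        x = ∑ i, p i := by
  rintro x ⟨p, hp, hxp⟩
  refine ⟨p, ⟨hp, hxp⟩, ?_⟩
  rintro q ⟨hq, hxq⟩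
  -- show q = p using the tree-flow lemma
  set d : Fin m → Fin n → ℤ := fun i j => (q i j : ℤ) - (p i j : ℤ) with hd
  have hsupp : ∀ i j, ¬ T.Adj (inl i) (inr j) → d i j = 0 := by
    intro i j h
    simp [hd, (hp i).1 j h, (hq i).1 j h]
  have hrow : ∀ i, ∑ j, d i j = 0 := by
    intro i
    simp only [hd, Finset.sum_sub_distrib, sub_eq_zero]
    exact_mod_cast ((hq i).2.trans (hp i).2.symm)
  have hcol : ∀ j, ∑ i, d i j = 0 := by
    intro j
    have h1 : ∑ i, p i j = x j := by
      rw [hxp]; simp [Finset.sum_apply]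
    have h2 : ∑ i, q i j = x j := by
      rw [hxq]; simp [Finset.sum_apply]
    simp only [hd, Finset.sum_sub_distrib, sub_eq_zero]
    exact_mod_cast (h2.trans h1.symm)
  have := tree_flow_zero T htree.IsAcyclic d hsupp hrow hcol
  funext i j
  have h := this i j
  simp only [hd, sub_eq_zero] at h
  exact_mod_cast h
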